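/- If H is a star K_{1,m} (m ≥ 1), then the corona H ∘ K_1 is a minimal DTDP-graph: H ∘ K_1 has a DT-pair but for every edge e of H ∘ K_1, the graph (H ∘ K_1) − e has no DT-pair. -/

import Mathlib

/-- `D` is a dominating set of `G`: every vertex outside `D` has a neighbor in `D`. -/
def Dominates {V : Type*} (G : SimpleGraph V) (D : Set V) : Prop :=
  ∀ v, v ∉ D → ∃ u ∈ D, G.Adj v u

/-- `T` is a total dominating set of `G`: every vertex has a neighbor in `T`. -/
def TotallyDominates {V : Type*} (G : SimpleGraph V) (T : Set V) : Prop :=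
  ∀ v, ∃ u ∈ T, G.Adj v u

/-- `(D, T)` is a DT-pair in `G`. -/
def DTPair {V : Type*} (G : SimpleGraph V) (D T : Set V) : Prop :=
  Disjoint D T ∧ Dominates G D ∧ TotallyDominates G T

/-- `G` has a DT-pair. -/
def HasDTPair {V : Type*} (G : SimpleGraph V) : Prop :=
  ∃ D T : Set V, DTPair G D T

/-- The corona `H ∘ K₁`: for each vertex `v` of `H` (copy `Sum.inl v`) a new leaf
`Sum.inr v` is attached. -/
def corona {V : Type*} (H : SimpleGraph V) : SimpleGraph (V ⊕ V) where
  Adj a b := match a, b with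
    | Sum.inl u, Sum.inl w => H.Adj u w
    | Sum.inl u, Sum.inr w => u = w
    | Sum.inr u, Sum.inl w => u = w
    | Sum.inr _, Sum.inr _ => False
  symm := by
    refine ⟨?_⟩
    rintro (u | u) (w | w) h
    · exact h.symm
    · exact h.symm
    · exact h.symm
    · exact h
  loopless := by
    refine ⟨?_⟩
    rintro (u | u) h
    · exact H.ne_of_adj h rfl
    · exact h

/-- The star `K_{1,m}`: center `none`, leaves `some i` for `i : Fin m`. -/
def starGraph (m : ℕ) : SimpleGraph (Option (Fin m)) :=
  SimpleGraph.fromRel (fun a _ => a = none)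
-- aux lemmas
lemma corona_adj_inl_inl {V : Type*} (H : SimpleGraph V) (u w : V) :
    (corona H).Adj (Sum.inl u) (Sum.inl w) ↔ H.Adj u w := Iff.rfl

lemma corona_adj_inr {V : Type*} (H : SimpleGraph V) (u : V) (b : V ⊕ V) :
    (corona H).Adj (Sum.inr u) b ↔ b = Sum.inl u := by
  cases b with
  | inl w => exact ⟨fun h => by cases h; rfl, fun h => by cases h; rfl⟩
  | inr w => exact ⟨fun h => h.elim, fun h => by cases h⟩

lemma star_adj (m : ℕ) (a b : Option (Fin m)) :
    (starGraph m).Adj a b ↔ a ≠ b ∧ (a = none ∨ b = none) := by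
  simp [starGraph]

lemma pendant_case (m : ℕ) (v : Option (Fin m)) :
    ¬ HasDTPair ((corona (starGraph m)).deleteEdges {s(Sum.inl v, Sum.inr v)}) := by
  rintro ⟨D, T, _, _, hT⟩
  obtain ⟨u, _, hadj⟩ := hT (Sum.inr v)
  rw [SimpleGraph.deleteEdges_adj] at hadj
  obtain ⟨h1, h2⟩ := hadj
  rw [corona_adj_inr] at h1
  subst h1
  exact h2 (by rw [Sym2.eq_swap]; rfl)

lemma star_edge_case (m : ℕ) (i : Fin m) :
    ¬ HasDTPair ((corona (starGraph m)).deleteEdges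
      {s(Sum.inl (none : Option (Fin m)), Sum.inl (some i))}) := by
  rintro ⟨D, T, hdisj, hD, hT⟩
  -- total domination of the leaf inr (some i) forces inl (some i) ∈ T
  obtain ⟨u, huT, hadj⟩ := hT (Sum.inr (some i))
  rw [SimpleGraph.deleteEdges_adj, corona_adj_inr] at hadj
  obtain ⟨rfl, -⟩ := hadj
  -- total domination of inl (some i) forces inr (some i) ∈ T
  obtain ⟨w, hwT, hadj2⟩ := hT (Sum.inl (some i))
  rw [SimpleGraph.deleteEdges_adj] at hadj2
  obtain ⟨h1, h2⟩ := hadj2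
  have hw : w = Sum.inr (some i) := by
    cases w with
    | inl x =>
      rw [corona_adj_inl_inl, star_adj] at h1
      rcases h1 with ⟨hne, h | h⟩
      · exact absurd h (by simp)
      · subst h
        exact absurd (by rw [Sym2.eq_swap] : s(Sum.inl (some i), Sum.inl (none : Option (Fin m))) = _) h2
    | inr x =>
      have : (some i) = x := h1
      rw [this]
  subst hw
  -- now dominate inr (some i)
  have hnotD : Sum.inr (some i) ∉ D := fun h => Set.disjoint_left.mp hdisj h hwT
  obtain ⟨z, hzD, hadj3⟩ := hD (Sum.inr (some i)) hnotD
  rw [SimpleGraph.deleteEdges_adj, corona_adj_inr] at hadj3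
  obtain ⟨rfl, -⟩ := hadj3
  exact Set.disjoint_left.mp hdisj hzD huT

theorem corona_star_minimal (m : ℕ) (hm : 1 ≤ m) :
    HasDTPair (corona (starGraph m)) ∧
    ∀ e ∈ (corona (starGraph m)).edgeSet,
      ¬ HasDTPair ((corona (starGraph m)).deleteEdges {e}) := by
  constructor
  · refine ⟨Set.range Sum.inr, Set.range Sum.inl, ?_, ?_, ?_⟩
    · rw [Set.disjoint_left]
      rintro _ ⟨v, rfl⟩ ⟨w, h⟩
      cases h
    · rintro (v | v) hv
      · exact ⟨Sum.inr v, ⟨v, rfl⟩, rfl⟩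
      · exact absurd ⟨v, rfl⟩ hv
    · rintro (v | v)
      · cases v with
        | none =>
          refine ⟨Sum.inl (some ⟨0, hm⟩), ⟨_, rfl⟩, ?_⟩
          rw [corona_adj_inl_inl, star_adj]; simp
        | some i =>
          refine ⟨Sum.inl none, ⟨_, rfl⟩, ?_⟩
          rw [corona_adj_inl_inl, star_adj]; simp
      · exact ⟨Sum.inl v, ⟨v, rfl⟩, rfl⟩
  · intro e he
    induction e using Sym2.ind with
    | _ a b =>
      rw [SimpleGraph.mem_edgeSet] at he
      match a, b with
      | Sum.inl u, Sum.inl w =>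
        rw [corona_adj_inl_inl, star_adj] at he
        rcases he with ⟨hne, h | h⟩
        · subst h
          cases w with
          | none => exact absurd rfl hne
          | some i => exact star_edge_case m i
        · subst h
          cases u with
          | none => exact absurd rfl hne
          | some i => rw [Sym2.eq_swap]; exact star_edge_case m i
      | Sum.inl u, Sum.inr w =>
        have : u = w := he
        subst this
        exact pendant_case m u
      | Sum.inr u, Sum.inl w =>
        have : u = w := he
        subst this
        rw [Sym2.eq_swap]
        exact pendant_case m u
      | Sum.inr u, Sum.inr w => exact he.elim
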